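/- Let r be a real number with r ≠ 0 and cos r ≠ 0. Then the sequence ⟨R_n(r)⟩_{n ≥ 0} has infinitely many nonzero terms; that is, for every natural number N there exists n ≥ N with R_n(r) ≠ 0. -/

import Mathlib

open MeasureTheory intervalIntegral

/-- Hermite's integral `R_n(r) = ∫_0^r ((r² - x²)ⁿ / (2ⁿ n!)) cos x dx`. -/
noncomputable def R (n : ℕ) (r : ℝ) : ℝ :=
  ∫ x in (0:ℝ)..r, ((r ^ 2 - x ^ 2) ^ n / (2 ^ n * n.factorial)) * Real.cos x

/-- auxiliary: unnormalized integral -/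
noncomputable def II (n : ℕ) (r : ℝ) : ℝ :=
  ∫ x in (0:ℝ)..r, (r ^ 2 - x ^ 2) ^ n * Real.cos x

lemma R_eq (n : ℕ) (r : ℝ) : R n r = II n r / (2 ^ n * n.factorial) := by
  unfold R II
  rw [← _root_.intervalIntegral.integral_div]
  congr 1; ext x; ring

lemma hderiv_base (r x : ℝ) : HasDerivAt (fun x : ℝ => r ^ 2 - x ^ 2) (-(2 * x)) x := by
  simpa using ((hasDerivAt_pow 2 x).const_sub (r ^ 2))

lemma stepA (k : ℕ) (r : ℝ) :
    II (k + 1) r = (2 * ((k:ℝ) + 1)) * ∫ x in (0:ℝ)..r, (x * (r ^ 2 - x ^ 2) ^ k) * Real.sin x := by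
  have hu : ∀ x ∈ Set.uIcc (0:ℝ) r,
      HasDerivAt (fun x : ℝ => (r ^ 2 - x ^ 2) ^ (k + 1))
        (((k:ℝ) + 1) * (r ^ 2 - x ^ 2) ^ k * (-(2 * x))) x := by
    intro x _
    have := (hderiv_base r x).fun_pow (k + 1)
    simpa using this
  have hv : ∀ x ∈ Set.uIcc (0:ℝ) r, HasDerivAt Real.sin (Real.cos x) x :=
    fun x _ => Real.hasDerivAt_sin x
  have hu' : IntervalIntegrable (fun x : ℝ => ((k:ℝ) + 1) * (r ^ 2 - x ^ 2) ^ k * (-(2 * x)))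
      volume 0 r := (by fun_prop : Continuous _).intervalIntegrable _ _
  have hv' : IntervalIntegrable Real.cos volume 0 r :=
    Real.continuous_cos.intervalIntegrable _ _
  have h := integral_mul_deriv_eq_deriv_mul hu hv hu' hv'
  unfold II
  rw [h, ← _root_.intervalIntegral.integral_const_mul]
  have hb1 : ((r ^ 2 - r ^ 2 : ℝ)) ^ (k + 1) * Real.sin r = 0 := by simp
  have hb2 : ((r : ℝ) ^ 2 - 0 ^ 2) ^ (k + 1) * Real.sin 0 = 0 := by simp
  rw [hb1, hb2, sub_self, zero_sub, ← _root_.intervalIntegral.integral_neg]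
  apply integral_congr
  intro x _
  simp only []
  ring

lemma stepB (k : ℕ) (r : ℝ) :
    (∫ x in (0:ℝ)..r, (x * (r ^ 2 - x ^ 2) ^ (k + 1)) * Real.sin x)
      = (2 * (k:ℝ) + 3) * II (k + 1) r - (2 * (k:ℝ) + 2) * r ^ 2 * II k r := by
  have hu : ∀ x ∈ Set.uIcc (0:ℝ) r,
      HasDerivAt (fun x : ℝ => x * (r ^ 2 - x ^ 2) ^ (k + 1))
        ((r ^ 2 - x ^ 2) ^ (k + 1) + x * (((k:ℝ) + 1) * (r ^ 2 - x ^ 2) ^ k * (-(2 * x)))) x := by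
    intro x _
    have h1 := (hderiv_base r x).fun_pow (k + 1)
    have h2 := (hasDerivAt_id x).fun_mul (by simpa using h1 :
      HasDerivAt (fun x : ℝ => (r ^ 2 - x ^ 2) ^ (k + 1))
        (((k:ℝ) + 1) * (r ^ 2 - x ^ 2) ^ k * (-(2 * x))) x)
    simpa [one_mul] using h2
  have hv : ∀ x ∈ Set.uIcc (0:ℝ) r, HasDerivAt (fun x => -Real.cos x) (Real.sin x) x :=
    fun x _ => by simpa using (Real.hasDerivAt_cos x).fun_neg
  have hu' : IntervalIntegrable
      (fun x : ℝ => (r ^ 2 - x ^ 2) ^ (k + 1) + x * (((k:ℝ) + 1) * (r ^ 2 - x ^ 2) ^ k * (-(2 * x))))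
      volume 0 r := (by fun_prop : Continuous _).intervalIntegrable _ _
  have hv' : IntervalIntegrable Real.sin volume 0 r :=
    Real.continuous_sin.intervalIntegrable _ _
  have h := integral_mul_deriv_eq_deriv_mul hu hv hu' hv'
  rw [h]
  have hb1 : (r * (r ^ 2 - r ^ 2) ^ (k + 1)) * (-Real.cos r) = 0 := by simp
  have hb2 : ((0:ℝ) * (r ^ 2 - 0 ^ 2) ^ (k + 1)) * (-Real.cos 0) = 0 := by simp
  rw [hb1, hb2, sub_self, zero_sub]
  have key : (∫ x in (0:ℝ)..r,
      ((r ^ 2 - x ^ 2) ^ (k + 1) + x * (((k:ℝ) + 1) * (r ^ 2 - x ^ 2) ^ k * (-(2 * x)))) * (-Real.cos x))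
      = ∫ x in (0:ℝ)..r,
        ((2 * (k:ℝ) + 2) * r ^ 2 * ((r ^ 2 - x ^ 2) ^ k * Real.cos x)
          - (2 * (k:ℝ) + 3) * ((r ^ 2 - x ^ 2) ^ (k + 1) * Real.cos x)) := by
    apply integral_congr
    intro x _
    simp only []
    ring
  rw [key, _root_.intervalIntegral.integral_sub ((by fun_prop : Continuous _).intervalIntegrable _ _)
    ((by fun_prop : Continuous _).intervalIntegrable _ _),
    _root_.intervalIntegral.integral_const_mul, _root_.intervalIntegral.integral_const_mul]
  unfold II; ring

lemma II_rec (k : ℕ) (r : ℝ) :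
    II (k + 2) r = (2 * ((k:ℝ) + 2)) *
      ((2 * (k:ℝ) + 3) * II (k + 1) r - (2 * (k:ℝ) + 2) * r ^ 2 * II k r) := by
  have hA := stepA (k + 1) r
  rw [stepB k r] at hA
  rw [show k + 1 + 1 = k + 2 from rfl] at hA
  rw [hA]
  push_cast
  ring

lemma II_zero (r : ℝ) : II 0 r = Real.sin r := by
  unfold II; simp

lemma II_one (r : ℝ) : II 1 r = 2 * (Real.sin r - r * Real.cos r) := by
  have hA := stepA 0 r
  have hxsin : (∫ x in (0:ℝ)..r, (x * (r ^ 2 - x ^ 2) ^ 0) * Real.sin x)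
      = Real.sin r - r * Real.cos r := by
    have hu : ∀ x ∈ Set.uIcc (0:ℝ) r, HasDerivAt (fun x : ℝ => x) (1:ℝ) x :=
      fun x _ => hasDerivAt_id x
    have hv : ∀ x ∈ Set.uIcc (0:ℝ) r, HasDerivAt (fun x => -Real.cos x) (Real.sin x) x :=
      fun x _ => by simpa using (Real.hasDerivAt_cos x).fun_neg
    have h := integral_mul_deriv_eq_deriv_mul hu hv
      ((continuous_const).intervalIntegrable _ _) (Real.continuous_sin.intervalIntegrable _ _)
    have : (∫ x in (0:ℝ)..r, x * Real.sin x) = Real.sin r - r * Real.cos r := by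
      rw [h]
      simp only [one_mul]
      rw [_root_.intervalIntegral.integral_neg, integral_cos]
      simp
      ring
    simpa using this
  rw [hA, hxsin]
  norm_num

theorem R_infinitely_many_nonzero (r : ℝ) (hr : r ≠ 0) (hc : Real.cos r ≠ 0) :
    ∀ N : ℕ, ∃ n : ℕ, N ≤ n ∧ R n r ≠ 0 := by
  intro N
  by_contra h
  push_neg at h
  have hII : ∀ n, N ≤ n → II n r = 0 := by
    intro n hn
    have hz := h n hn
    have hden : ((2:ℝ) ^ n * (n.factorial : ℝ)) ≠ 0 := by positivity
    rw [R_eq, div_eq_zero_iff] at hz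
    rcases hz with h' | h'
    · exact h'
    · exact absurd h' hden
  have key : ∀ m : ℕ, ∀ j : ℕ, N ≤ j + m → II j r = 0 := by
    intro m
    induction m with
    | zero => intro j hj; exact hII j (by simpa using hj)
    | succ m ih =>
      intro j hj
      by_cases hNj : N ≤ j
      · exact hII j hNj
      · have h1 : II (j + 1) r = 0 := ih (j + 1) (by omega)
        have h2 : II (j + 2) r = 0 := ih (j + 2) (by omega)
        have hrec := II_rec j r
        rw [h1, h2] at hrec
        have hz : ((2 * ((j:ℝ) + 2)) * ((2 * (j:ℝ) + 2) * r ^ 2)) * II j r = 0 := by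
          linear_combination hrec
        rcases mul_eq_zero.mp hz with h' | h'
        · exact absurd h' (by positivity)
        · exact h'
  have h0 : II 0 r = 0 := key N 0 (by omega)
  have h1 : II 1 r = 0 := key N 1 (by omega)
  rw [II_zero] at h0
  rw [II_one] at h1
  have : r * Real.cos r = 0 := by
    rw [h0] at h1; linarith
  rcases mul_eq_zero.mp this with h' | h'
  · exact hr h'
  · exact hc h'
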